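/- In the setting of the product graph Dirac operator 𝒟(G) with d cycle-digraph factors and (D-d) directed-path factors: if at least one directed-path factor has an even number of vertices then ker 𝒟(G) = 0; if all directed-path factors have odd vertex counts then dim ker 𝒟(G) ≥ rank(γ). -/

import Mathlib

/-- Anti-symmetrized adjacency matrix of the cycle digraph on `N` vertices. -/
def cycleAsAdj (N : ℕ) : Matrix (Fin N) (Fin N) ℂ :=
  fun j k => if (k : ℕ) = ((j : ℕ) + 1) % N then 1
    else if (j : ℕ) = ((k : ℕ) + 1) % N then -1 else 0

/-- Anti-symmetrized adjacency matrix of the simple directed path on `N` vertices. -/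
def pathAsAdj (N : ℕ) : Matrix (Fin N) (Fin N) ℂ :=
  fun j k => if (k : ℕ) = (j : ℕ) + 1 then 1
    else if (j : ℕ) = (k : ℕ) + 1 then -1 else 0

open Finset

lemma fin_sum_ite {N : ℕ} (t : ℕ) (ht : t < N) (c : Fin N → ℂ) :
    ∑ j : Fin N, (if (j : ℕ) = t then c j else 0) = c ⟨t, ht⟩ := by
  rw [Fintype.sum_eq_single (⟨t, ht⟩ : Fin N)]
  · simp
  · intro j hj
    rw [if_neg]
    intro hc
    exact hj (Fin.ext hc)

lemma fin_sum_ite_zero {N : ℕ} (t : ℕ) (ht : ¬ t < N) (c : Fin N → ℂ) :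
    ∑ j : Fin N, (if (j : ℕ) = t then c j else 0) = 0 := by
  apply Finset.sum_eq_zero
  intro j _
  rw [if_neg]
  intro hc
  exact ht (hc ▸ j.isLt)

lemma path_row {N : ℕ} (g : Fin N → ℂ) (i : Fin N) :
    ∑ j, pathAsAdj N i j * g j =
      (if h : (i : ℕ) + 1 < N then g ⟨(i : ℕ) + 1, h⟩ else 0) -
      (if h : 0 < (i : ℕ) then g ⟨(i : ℕ) - 1, lt_of_le_of_lt (Nat.sub_le _ _) i.isLt⟩ else 0) := by
  have key : ∀ j : Fin N, pathAsAdj N i j * g j =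
      (if (j : ℕ) = (i : ℕ) + 1 then g j else 0) +
      (if (j : ℕ) = (i : ℕ) - 1 ∧ 0 < (i : ℕ) then -g j else 0) := by
    intro j
    unfold pathAsAdj
    have hj := j.isLt
    have hi := i.isLt
    split_ifs <;> first | ring1 | (exfalso; omega)
  rw [Finset.sum_congr rfl (fun j _ => key j), Finset.sum_add_distrib]
  have h1 : ∑ j : Fin N, (if (j : ℕ) = (i : ℕ) + 1 then g j else 0) =
      (if h : (i : ℕ) + 1 < N then g ⟨(i : ℕ) + 1, h⟩ else 0) := by
    split_ifs with h
    · exact fin_sum_ite _ h g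
    · exact fin_sum_ite_zero _ h g
  have h2 : ∑ j : Fin N, (if (j : ℕ) = (i : ℕ) - 1 ∧ 0 < (i : ℕ) then -g j else 0) =
      -(if h : 0 < (i : ℕ) then g ⟨(i : ℕ) - 1, lt_of_le_of_lt (Nat.sub_le _ _) i.isLt⟩ else 0) := by
    by_cases h : 0 < (i : ℕ)
    · rw [dif_pos h]
      have : ∀ j : Fin N, (if (j : ℕ) = (i : ℕ) - 1 ∧ 0 < (i : ℕ) then -g j else 0)
          = (if (j : ℕ) = (i : ℕ) - 1 then (-g) j else 0) := by
        intro j; simp [h]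
      rw [Finset.sum_congr rfl (fun j _ => this j),
        fin_sum_ite ((i:ℕ)-1) (lt_of_le_of_lt (Nat.sub_le _ _) i.isLt) (-g)]
      simp
    · rw [dif_neg h, neg_zero]
      apply Finset.sum_eq_zero
      intro j _
      rw [if_neg]
      tauto
  rw [h1, h2, sub_eq_add_neg]

lemma cycle_row_one {N : ℕ} (hN : 3 ≤ N) (i : Fin N) :
    ∑ j, cycleAsAdj N i j = 0 := by
  have hi := i.isLt
  have hmod1 : ((i : ℕ) + 1) % N = if (i : ℕ) + 1 = N then 0 else (i : ℕ) + 1 := by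
    split_ifs with h
    · rw [h, Nat.mod_self]
    · exact Nat.mod_eq_of_lt (by omega)
  have hmod2 : ∀ j : Fin N, ((j : ℕ) + 1) % N = if (j : ℕ) + 1 = N then 0 else (j : ℕ) + 1 := by
    intro j
    have := j.isLt
    split_ifs with h
    · rw [h, Nat.mod_self]
    · exact Nat.mod_eq_of_lt (by omega)
  have key : ∀ j : Fin N, cycleAsAdj N i j =
      (if (j : ℕ) = (if (i : ℕ) + 1 = N then 0 else (i : ℕ) + 1) then 1 else 0) +
      (if (j : ℕ) = (if (i : ℕ) = 0 then N - 1 else (i : ℕ) - 1) then (-1 : ℂ) else 0) := by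
    intro j
    have hj := j.isLt
    unfold cycleAsAdj
    rw [hmod1, hmod2 j]
    split_ifs <;> first | ring1 | (exfalso; omega)
  rw [Finset.sum_congr rfl (fun j _ => key j), Finset.sum_add_distrib,
    fin_sum_ite _ (by split_ifs <;> omega) (fun _ => (1 : ℂ)),
    fin_sum_ite _ (by split_ifs <;> omega) (fun _ => (-1 : ℂ))]
  ring

lemma path_row_parity {N : ℕ} (hN : Odd N) (i : Fin N) :
    ∑ j, pathAsAdj N i j * (if Even (j : ℕ) then (1 : ℂ) else 0) = 0 := by
  rw [path_row]
  have hi := i.isLt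
  have hN' := hN
  rw [Nat.odd_iff] at hN'
  have hio := Nat.even_or_odd (i : ℕ)
  rw [Nat.even_iff, Nat.odd_iff] at hio
  simp only [Fin.val_mk]
  split_ifs <;> (try (exfalso; simp only [Nat.even_iff] at *; omega)) <;> norm_num

lemma path_ker_even {N : ℕ} (hN2 : 2 ≤ N) (hN : Even N) (g : Fin N → ℂ)
    (hg : ∀ i, ∑ j, pathAsAdj N i j * g j = 0) : ∀ i, g i = 0 := by
  set G : ℕ → ℂ := fun k => if h : k < N then g ⟨k, h⟩ else 0 with hG
  have hGg : ∀ (k : ℕ) (h : k < N), G k = g ⟨k, h⟩ := fun k h => dif_pos h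
  have hG0 : ∀ k, ¬ k < N → G k = 0 := fun k h => dif_neg h
  have hrow : ∀ i : ℕ, i < N → G (i + 1) = (if 0 < i then G (i - 1) else 0) := by
    intro i h
    have h0 := hg ⟨i, h⟩
    rw [path_row] at h0
    simp only [Fin.val_mk] at h0
    have e1 : G (i + 1) = if h' : i + 1 < N then g ⟨i + 1, h'⟩ else 0 := rfl
    rw [e1]
    have e2 : (if 0 < i then G (i - 1) else 0) =
        if h' : 0 < i then g ⟨i - 1, lt_of_le_of_lt (Nat.sub_le _ _) h⟩ else 0 := by
      split_ifs with h'
      · exact dif_pos _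
      · rfl
    rw [e2]
    exact sub_eq_zero.mp h0
  have hG1 : G 1 = 0 := by
    have := hrow 0 (by omega)
    simpa using this
  have htop : G (N - 2) = 0 := by
    have h1 := hrow (N - 1) (by omega)
    rw [show N - 1 + 1 = N by omega, hG0 N (by omega), if_pos (by omega : 0 < N - 1)] at h1
    rw [show N - 1 - 1 = N - 2 by omega] at h1
    exact h1.symm
  have hstep : ∀ i, 1 ≤ i → i < N → G (i + 1) = G (i - 1) := by
    intro i h1 h2
    rw [hrow i h2, if_pos (by omega)]
  have hodd : ∀ k, Odd k → G k = 0 := by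
    intro k
    induction k using Nat.strong_induction_on with
    | _ k IH =>
      intro hk
      by_cases h : k < N
      · rcases eq_or_lt_of_le (show 1 ≤ k from hk.pos) with h1 | h1
        · rw [← h1]; exact hG1
        · have h3 : G ((k - 1) + 1) = G ((k - 1) - 1) := hstep (k - 1) (by omega) (by omega)
          rw [show k - 1 + 1 = k by omega, show k - 1 - 1 = k - 2 by omega] at h3
          rw [h3]
          refine IH (k - 2) (by omega) ?_
          obtain ⟨a, ha⟩ := hk
          exact ⟨a - 1, by omega⟩
      · exact hG0 k h
  have heven : ∀ m k, N - k = m → Even k → k < N → G k = 0 := by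
    intro m
    induction m using Nat.strong_induction_on with
    | _ m IH =>
      intro k hm hk hkN
      obtain ⟨a, ha⟩ := hk
      obtain ⟨b, hb⟩ := hN
      rcases eq_or_lt_of_le (show k ≤ N - 2 by omega) with h1 | h1
      · rw [h1]; exact htop
      · have h3 : G ((k + 1) + 1) = G ((k + 1) - 1) := hstep (k + 1) (by omega) (by omega)
        rw [show k + 1 + 1 = k + 2 by omega, show k + 1 - 1 = k by omega] at h3
        rw [← h3]
        exact IH (N - (k + 2)) (by omega) (k + 2) rfl ⟨a + 1, by omega⟩ (by omega)
  intro i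
  rw [← hGg i i.isLt]
  rcases Nat.even_or_odd (i : ℕ) with he | ho
  · exact heven (N - i) i rfl he i.isLt
  · exact hodd i ho

lemma path_antisymm (N : ℕ) (i j : Fin N) : pathAsAdj N j i = - pathAsAdj N i j := by
  unfold pathAsAdj
  split_ifs <;> first | ring1 | (exfalso; omega)

lemma path_conj (N : ℕ) (i j : Fin N) :
    (starRingEnd ℂ) (pathAsAdj N i j) = pathAsAdj N i j := by
  unfold pathAsAdj
  split_ifs <;> simp

lemma cycle_antisymm {N : ℕ} (hN : 3 ≤ N) (i j : Fin N) :
    cycleAsAdj N j i = - cycleAsAdj N i j := by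
  have hi := i.isLt
  have hj := j.isLt
  have hm : ∀ k : Fin N, ((k : ℕ) + 1) % N = if (k : ℕ) + 1 = N then 0 else (k : ℕ) + 1 := by
    intro k
    have := k.isLt
    split_ifs with h
    · rw [h, Nat.mod_self]
    · exact Nat.mod_eq_of_lt (by omega)
  unfold cycleAsAdj
  rw [hm i, hm j]
  split_ifs <;> first | ring1 | (exfalso; omega)

lemma cycle_conj (N : ℕ) (i j : Fin N) :
    (starRingEnd ℂ) (cycleAsAdj N i j) = cycleAsAdj N i j := by
  unfold cycleAsAdj
  split_ifs <;> simp

lemma sum_update {D : ℕ} {N : Fin D → ℕ} (p : ∀ ν, Fin (N ν)) (μ : Fin D)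
    (f : (∀ ν, Fin (N ν)) → ℂ) :
    ∑ q : ∀ ν, Fin (N ν),
      (∏ ν ∈ Finset.univ.erase μ, (if p ν = q ν then (1 : ℂ) else 0)) * f q
      = ∑ j : Fin (N μ), f (Function.update p μ j) := by
  have hinj : Function.Injective (Function.update p μ) := fun a b hab => by
    have := congrFun hab μ
    simpa using this
  have h1 : ∀ q : ∀ ν, Fin (N ν),
      (∏ ν ∈ Finset.univ.erase μ, (if p ν = q ν then (1 : ℂ) else 0)) * f q
      = if (∀ ν ∈ Finset.univ.erase μ, p ν = q ν) then f q else 0 := by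
    intro q
    rw [Finset.prod_boole]
    split_ifs <;> simp
  rw [Finset.sum_congr rfl (fun q _ => h1 q), ← Finset.sum_filter]
  have h2 : Finset.univ.filter (fun q : ∀ ν, Fin (N ν) => ∀ ν ∈ Finset.univ.erase μ, p ν = q ν)
      = Finset.image (Function.update p μ) Finset.univ := by
    ext q
    simp only [Finset.mem_filter, Finset.mem_univ, true_and, Finset.mem_image,
      Finset.mem_erase, Finset.mem_univ, and_true]
    constructor
    · intro h
      refine ⟨q μ, ?_⟩
      funext ν
      by_cases hν : ν = μ
      · subst hν; simp
      · rw [Function.update_of_ne hν]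
        exact h ν hν
    · rintro ⟨j, rfl⟩ ν hν
      rw [Function.update_of_ne hν]
  rw [h2, Finset.sum_image (fun a _ b _ hab => hinj hab)]

section Ops

variable {D r : ℕ} {N : Fin D → ℕ}

/-- spin operator -/
noncomputable def Gop (γ : Fin D → Matrix (Fin r) (Fin r) ℂ) (μ : Fin D)
    (v : ((∀ ν, Fin (N ν)) × Fin r) → ℂ) : ((∀ ν, Fin (N ν)) × Fin r) → ℂ :=
  fun x => ∑ u, γ μ x.2 u * v (x.1, u)

/-- slot operator -/
noncomputable def Sop (A : ∀ μ, Matrix (Fin (N μ)) (Fin (N μ)) ℂ) (μ : Fin D)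
    (v : ((∀ ν, Fin (N ν)) × Fin r) → ℂ) : ((∀ ν, Fin (N ν)) × Fin r) → ℂ :=
  fun x => ∑ j, A μ (x.1 μ) j * v (Function.update x.1 μ j, x.2)

variable (γ : Fin D → Matrix (Fin r) (Fin r) ℂ) (A : ∀ μ, Matrix (Fin (N μ)) (Fin (N μ)) ℂ)

lemma Gop_Sop (μ ν : Fin D) (v : ((∀ ν, Fin (N ν)) × Fin r) → ℂ) :
    Gop γ μ (Sop A ν v) = Sop A ν (Gop γ μ v) := by
  funext x
  unfold Gop Sop
  simp only [Finset.mul_sum]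
  rw [Finset.sum_comm]
  exact Finset.sum_congr rfl fun j _ => Finset.sum_congr rfl fun u _ => by ring

lemma Sop_Sop {μ ν : Fin D} (h : μ ≠ ν) (v : ((∀ ν, Fin (N ν)) × Fin r) → ℂ) :
    Sop A μ (Sop A ν v) = Sop A ν (Sop A μ v) := by
  funext x
  unfold Sop
  simp only [Finset.mul_sum]
  rw [Finset.sum_comm]
  refine Finset.sum_congr rfl fun j _ => Finset.sum_congr rfl fun k _ => ?_
  rw [Function.update_of_ne h, Function.update_of_ne (Ne.symm h),
    Function.update_comm h]
  ring

lemma Gop_Gop_diag {μ : Fin D} (hsq : γ μ * γ μ = 1)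
    (v : ((∀ ν, Fin (N ν)) × Fin r) → ℂ) :
    Gop γ μ (Gop γ μ v) = v := by
  funext x
  unfold Gop
  simp only [Finset.mul_sum]
  rw [Finset.sum_comm]
  have h1 : ∀ u', ∑ u, γ μ x.2 u * (γ μ u u' * v (x.1, u'))
      = (γ μ * γ μ) x.2 u' * v (x.1, u') := by
    intro u'
    rw [Matrix.mul_apply, Finset.sum_mul]
    exact Finset.sum_congr rfl fun u _ => by ring
  rw [Finset.sum_congr rfl fun u' _ => h1 u', hsq]
  simp [Matrix.one_apply, ite_mul]

lemma Gop_Gop_pair (a b : Fin D)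
    (v : ((∀ ν, Fin (N ν)) × Fin r) → ℂ) (x : (∀ ν, Fin (N ν)) × Fin r) :
    Gop γ a (Gop γ b v) x = ∑ u', (γ a * γ b) x.2 u' * v (x.1, u') := by
  unfold Gop
  simp only [Finset.mul_sum]
  rw [Finset.sum_comm]
  refine Finset.sum_congr rfl fun u' _ => ?_
  rw [Matrix.mul_apply, Finset.sum_mul]
  exact Finset.sum_congr rfl fun u _ => by ring

lemma Gop_Gop_off {μ ν : Fin D} (hanti : γ μ * γ ν + γ ν * γ μ = 0)
    (v : ((∀ ν, Fin (N ν)) × Fin r) → ℂ) (x : (∀ ν, Fin (N ν)) × Fin r) :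
    Gop γ μ (Gop γ ν v) x + Gop γ ν (Gop γ μ v) x = 0 := by
  rw [Gop_Gop_pair, Gop_Gop_pair, ← Finset.sum_add_distrib]
  have h1 : ∀ u', (γ μ * γ ν) x.2 u' * v (x.1, u') + (γ ν * γ μ) x.2 u' * v (x.1, u') = 0 := by
    intro u'
    have h0 : (γ μ * γ ν + γ ν * γ μ) x.2 u' = (0 : Matrix (Fin r) (Fin r) ℂ) x.2 u' := by
      rw [hanti]
    simp only [Matrix.add_apply, Matrix.zero_apply] at h0
    calc (γ μ * γ ν) x.2 u' * v (x.1, u') + (γ ν * γ μ) x.2 u' * v (x.1, u')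
        = ((γ μ * γ ν) x.2 u' + (γ ν * γ μ) x.2 u') * v (x.1, u') := by ring
      _ = 0 := by rw [h0]; ring
  rw [Finset.sum_congr rfl fun u' _ => h1 u']
  simp

lemma Sop_zero (μ : Fin D) :
    Sop A μ (fun _ : (∀ ν, Fin (N ν)) × Fin r => (0 : ℂ)) = fun _ => 0 := by
  funext x
  unfold Sop
  simp

lemma Gop_zero (μ : Fin D) :
    Gop γ μ (fun _ : (∀ ν, Fin (N ν)) × Fin r => (0 : ℂ)) = fun _ => 0 := by
  funext x
  unfold Gop
  simp

lemma Sop_add (μ : Fin D) (v w : ((∀ ν, Fin (N ν)) × Fin r) → ℂ) :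
    Sop A μ (fun x => v x + w x) = fun x => Sop A μ v x + Sop A μ w x := by
  funext x
  unfold Sop
  simp [mul_add, Finset.sum_add_distrib]

lemma Sop_sum {ι : Type*} (μ : Fin D) (s : Finset ι)
    (F : ι → ((∀ ν, Fin (N ν)) × Fin r) → ℂ) :
    Sop A μ (fun x => ∑ i ∈ s, F i x) = fun x => ∑ i ∈ s, Sop A μ (F i) x := by
  funext x
  unfold Sop
  simp only [Finset.mul_sum]
  rw [Finset.sum_comm]

lemma Gop_sum {ι : Type*} (μ : Fin D) (s : Finset ι)
    (F : ι → ((∀ ν, Fin (N ν)) × Fin r) → ℂ) :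
    Gop γ μ (fun x => ∑ i ∈ s, F i x) = fun x => ∑ i ∈ s, Gop γ μ (F i) x := by
  funext x
  unfold Gop
  simp only [Finset.mul_sum]
  rw [Finset.sum_comm]

end Ops

section Ops2

variable {D r : ℕ} {N : Fin D → ℕ}
variable (γ : Fin D → Matrix (Fin r) (Fin r) ℂ) (A : ∀ μ, Matrix (Fin (N μ)) (Fin (N μ)) ℂ)

lemma dirac_mulVec (w : ((∀ ν, Fin (N ν)) × Fin r) → ℂ) (x : (∀ ν, Fin (N ν)) × Fin r) :
    (Matrix.of fun p q : (∀ ν, Fin (N ν)) × Fin r =>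
        ∑ μ, (A μ (p.1 μ) (q.1 μ)) * (γ μ p.2 q.2) *
          ∏ ν ∈ Finset.univ.erase μ, (if p.1 ν = q.1 ν then (1 : ℂ) else 0)).mulVec w x
      = ∑ μ, Sop A μ (Gop γ μ w) x := by
  have key : ∀ μ : Fin D, Sop A μ (Gop γ μ w) x
      = ∑ q1 : ∀ ν, Fin (N ν), ∑ q2 : Fin r,
          (A μ (x.1 μ) (q1 μ) * γ μ x.2 q2 *
            ∏ ν ∈ Finset.univ.erase μ, (if x.1 ν = q1 ν then (1 : ℂ) else 0)) * w (q1, q2) := by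
    intro μ
    unfold Sop Gop
    rw [show (∑ q1 : ∀ ν, Fin (N ν), ∑ q2 : Fin r,
          (A μ (x.1 μ) (q1 μ) * γ μ x.2 q2 *
            ∏ ν ∈ Finset.univ.erase μ, (if x.1 ν = q1 ν then (1 : ℂ) else 0)) * w (q1, q2))
        = ∑ q1 : ∀ ν, Fin (N ν),
            (∏ ν ∈ Finset.univ.erase μ, (if x.1 ν = q1 ν then (1 : ℂ) else 0)) *
            (∑ q2 : Fin r, A μ (x.1 μ) (q1 μ) * γ μ x.2 q2 * w (q1, q2)) from
      Finset.sum_congr rfl fun q1 _ => by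
        rw [Finset.mul_sum]
        exact Finset.sum_congr rfl fun q2 _ => by ring]
    rw [sum_update x.1 μ (fun q1 => ∑ q2 : Fin r, A μ (x.1 μ) (q1 μ) * γ μ x.2 q2 * w (q1, q2))]
    refine Finset.sum_congr rfl fun j _ => ?_
    rw [Function.update_self, Finset.mul_sum]
    exact Finset.sum_congr rfl fun u _ => by ring
  simp only [Matrix.mulVec, dotProduct, Matrix.of_apply, Fintype.sum_prod_type,
    Finset.sum_mul]
  rw [Finset.sum_congr rfl fun μ _ => key μ]
  trans (∑ q1 : ∀ ν, Fin (N ν), ∑ μ : Fin D, ∑ q2 : Fin r,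
      (A μ (x.1 μ) (q1 μ) * γ μ x.2 q2 *
        ∏ ν ∈ Finset.univ.erase μ, (if x.1 ν = q1 ν then (1 : ℂ) else 0)) * w (q1, q2))
  · exact Finset.sum_congr rfl fun q1 _ => Finset.sum_comm
  · exact Finset.sum_comm

lemma Sop_adjoint (μ : Fin D) (hA1 : ∀ i j, A μ j i = - A μ i j)
    (hA2 : ∀ i j, (starRingEnd ℂ) (A μ i j) = A μ i j)
    (v w : ((∀ ν, Fin (N ν)) × Fin r) → ℂ) :
    ∑ x : (∀ ν, Fin (N ν)) × Fin r, (starRingEnd ℂ) (v x) * Sop A μ w x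
      = - ∑ x : (∀ ν, Fin (N ν)) × Fin r, (starRingEnd ℂ) (Sop A μ v x) * w x := by
  unfold Sop
  simp only [Finset.mul_sum, map_sum, map_mul, Finset.sum_mul, hA2]
  simp only [← Finset.sum_neg_distrib]
  set f1 : (((∀ ν, Fin (N ν)) × Fin r) × Fin (N μ)) → ℂ := fun y =>
    (starRingEnd ℂ) (v y.1) * (A μ (y.1.1 μ) y.2 * w (Function.update y.1.1 μ y.2, y.1.2))
    with hf1
  set f2 : (((∀ ν, Fin (N ν)) × Fin r) × Fin (N μ)) → ℂ := fun y =>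
    -(A μ (y.1.1 μ) y.2 * (starRingEnd ℂ) (v (Function.update y.1.1 μ y.2, y.1.2)) * w y.1)
    with hf2
  have e : Function.Involutive (fun y : ((∀ ν, Fin (N ν)) × Fin r) × Fin (N μ) =>
      ((Function.update y.1.1 μ y.2, y.1.2), y.1.1 μ)) := by
    intro y
    simp [Function.update_idem, Function.update_self, Function.update_eq_self]
  calc ∑ x : (∀ ν, Fin (N ν)) × Fin r, ∑ j, f1 ((x, j) : _ × Fin (N μ))
      = ∑ y, f1 y := (Fintype.sum_prod_type f1).symm
    _ = ∑ y, f2 y := by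
        apply Fintype.sum_equiv e.toPerm
        intro y
        simp only [hf1, hf2, Function.Involutive.coe_toPerm, Function.update_idem,
          Function.update_self, Function.update_eq_self]
        rw [hA1]
        ring
    _ = ∑ x : (∀ ν, Fin (N ν)) × Fin r, ∑ j, f2 ((x, j) : _ × Fin (N μ)) :=
        Fintype.sum_prod_type f2
    _ = _ := Finset.sum_congr rfl fun x _ => Finset.sum_congr rfl fun j _ => rfl

end Ops2

open Matrix in
theorem dirac_ker_product_graph_min
    (D : ℕ) (N : Fin D → ℕ) (cyc : Fin D → Bool)
    (hcyc : ∀ μ, cyc μ = true → 3 ≤ N μ)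
    (hpath : ∀ μ, cyc μ = false → 2 ≤ N μ)
    (r : ℕ) (hr : 1 ≤ r)
    (γ : Fin D → Matrix (Fin r) (Fin r) ℂ)
    (hγ : ∀ μ ν, γ μ * γ ν + γ ν * γ μ =
      if μ = ν then (2 : ℂ) • (1 : Matrix (Fin r) (Fin r) ℂ) else 0) :
    let A : ∀ μ, Matrix (Fin (N μ)) (Fin (N μ)) ℂ :=
      fun μ => if cyc μ then cycleAsAdj (N μ) else pathAsAdj (N μ)
    let Dop : Matrix ((∀ μ, Fin (N μ)) × Fin r) ((∀ μ, Fin (N μ)) × Fin r) ℂ :=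
      Matrix.of fun p q => ∑ μ, (A μ (p.1 μ) (q.1 μ)) * (γ μ p.2 q.2) *
        ∏ ν ∈ Finset.univ.erase μ, (if p.1 ν = q.1 ν then (1 : ℂ) else 0)
    ((∃ μ, cyc μ = false ∧ Even (N μ)) →
        LinearMap.ker (Matrix.toLin' Dop) = ⊥) ∧
    ((∀ μ, cyc μ = false → Odd (N μ)) →
        r ≤ Module.finrank ℂ (LinearMap.ker (Matrix.toLin' Dop))) := by
  intro A Dop
  have hA : A = fun μ => if cyc μ then cycleAsAdj (N μ) else pathAsAdj (N μ) := rfl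
  have hsq : ∀ μ, γ μ * γ μ = 1 := by
    intro μ
    have h := hγ μ μ
    rw [if_pos rfl] at h
    have h2 : (2 : ℂ) • (γ μ * γ μ) = (2 : ℂ) • (1 : Matrix (Fin r) (Fin r) ℂ) := by
      rw [two_smul]
      exact h
    exact smul_right_injective (Matrix (Fin r) (Fin r) ℂ) two_ne_zero h2
  have hanti : ∀ μ ν, μ ≠ ν → γ μ * γ ν + γ ν * γ μ = 0 := by
    intro μ ν h
    have := hγ μ ν
    rwa [if_neg h] at this
  have hA1 : ∀ μ (i j : Fin (N μ)), A μ j i = - A μ i j := by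
    intro μ i j
    cases h : cyc μ
    · simp only [hA, h, Bool.false_eq_true, if_false]
      exact path_antisymm _ i j
    · simp only [hA, h, if_true]
      exact cycle_antisymm (hcyc μ h) i j
  have hA2 : ∀ μ (i j : Fin (N μ)), (starRingEnd ℂ) (A μ i j) = A μ i j := by
    intro μ i j
    cases h : cyc μ
    · simp only [hA, h, Bool.false_eq_true, if_false]
      exact path_conj _ i j
    · simp only [hA, h, if_true]
      exact cycle_conj _ i j
  have hmv : ∀ (u : ((∀ ν, Fin (N ν)) × Fin r) → ℂ) x,
      Dop.mulVec u x = ∑ μ, Sop A μ (Gop γ μ u) x := fun u x => dirac_mulVec γ A u x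
  constructor
  · rintro ⟨μ₀, hc0, heven⟩
    rw [LinearMap.ker_eq_bot']
    intro v hv
    have hv1 : Dop.mulVec v = 0 := by
      rw [← Matrix.toLin'_apply]
      exact hv
    have hv0 : ∀ x, ∑ μ, Sop A μ (Gop γ μ v) x = 0 := by
      intro x
      rw [← hmv v x, hv1]
      rfl
    have hquad : ∀ x, ∑ μ, Sop A μ (Sop A μ v) x = 0 := by
      intro x
      have hzf : (fun y => ∑ ν, Sop A ν (Gop γ ν v) y) =
          (fun _ : (∀ ν, Fin (N ν)) × Fin r => (0 : ℂ)) := funext hv0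
      have h2 : ∑ μ, ∑ ν, Sop A μ (Gop γ μ (Sop A ν (Gop γ ν v))) x = 0 := by
        calc ∑ μ, ∑ ν, Sop A μ (Gop γ μ (Sop A ν (Gop γ ν v))) x
            = ∑ μ, Sop A μ (Gop γ μ (fun y => ∑ ν, Sop A ν (Gop γ ν v) y)) x := by
              refine Finset.sum_congr rfl fun μ _ => ?_
              rw [Gop_sum γ μ Finset.univ (fun ν => Sop A ν (Gop γ ν v)),
                Sop_sum A μ Finset.univ (fun ν => Gop γ μ (Sop A ν (Gop γ ν v)))]
          _ = 0 := by
              refine Finset.sum_eq_zero fun μ _ => ?_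
              rw [hzf, Gop_zero, Sop_zero]
      have hdiag : ∀ μ, Sop A μ (Gop γ μ (Sop A μ (Gop γ μ v))) x = Sop A μ (Sop A μ v) x := by
        intro μ
        rw [Gop_Sop, Gop_Gop_diag γ (hsq μ)]
      have hoff : ∀ μ ν, μ ≠ ν →
          Sop A μ (Gop γ μ (Sop A ν (Gop γ ν v))) x
            + Sop A ν (Gop γ ν (Sop A μ (Gop γ μ v))) x = 0 := by
        intro μ ν h
        rw [Gop_Sop γ A μ ν, Gop_Sop γ A ν μ, Sop_Sop A (Ne.symm h) (Gop γ ν (Gop γ μ v))]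
        have hz : (fun z => Gop γ μ (Gop γ ν v) z + Gop γ ν (Gop γ μ v) z) =
            (fun _ : (∀ ν, Fin (N ν)) × Fin r => (0 : ℂ)) :=
          funext (Gop_Gop_off γ (hanti μ ν h) v)
        calc Sop A μ (Sop A ν (Gop γ μ (Gop γ ν v))) x
              + Sop A μ (Sop A ν (Gop γ ν (Gop γ μ v))) x
            = Sop A μ (fun y => Sop A ν (Gop γ μ (Gop γ ν v)) y
                + Sop A ν (Gop γ ν (Gop γ μ v)) y) x :=
              (congrFun (Sop_add A μ _ _) x).symm
          _ = Sop A μ (fun y => Sop A ν (fun z => Gop γ μ (Gop γ ν v) z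
                + Gop γ ν (Gop γ μ v) z) y) x := by
              congr 1
              funext y
              exact (congrFun (Sop_add A ν _ _) y).symm
          _ = 0 := by
              rw [hz]
              simp only [Sop_zero]
      have hcollapse : ∀ μ, ∑ ν, (Sop A μ (Gop γ μ (Sop A ν (Gop γ ν v))) x
          + Sop A ν (Gop γ ν (Sop A μ (Gop γ μ v))) x) = 2 * Sop A μ (Sop A μ v) x := by
        intro μ
        rw [Fintype.sum_eq_single μ (fun ν hν => hoff μ ν (Ne.symm hν))]
        rw [hdiag μ]
        ring
      have hsym : (2 : ℂ) * ∑ μ, ∑ ν, Sop A μ (Gop γ μ (Sop A ν (Gop γ ν v))) x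
          = (2 : ℂ) * ∑ μ, Sop A μ (Sop A μ v) x := by
        calc (2 : ℂ) * ∑ μ, ∑ ν, Sop A μ (Gop γ μ (Sop A ν (Gop γ ν v))) x
            = (∑ μ, ∑ ν, Sop A μ (Gop γ μ (Sop A ν (Gop γ ν v))) x)
              + (∑ ν, ∑ μ, Sop A μ (Gop γ μ (Sop A ν (Gop γ ν v))) x) := by
              rw [Finset.sum_comm]
              ring
          _ = ∑ μ, ∑ ν, (Sop A μ (Gop γ μ (Sop A ν (Gop γ ν v))) x
              + Sop A ν (Gop γ ν (Sop A μ (Gop γ μ v))) x) := by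
              rw [← Finset.sum_add_distrib]
              refine Finset.sum_congr rfl fun μ _ => ?_
              rw [← Finset.sum_add_distrib]
          _ = ∑ μ, 2 * Sop A μ (Sop A μ v) x := Finset.sum_congr rfl fun μ _ => hcollapse μ
          _ = (2 : ℂ) * ∑ μ, Sop A μ (Sop A μ v) x := by rw [Finset.mul_sum]
      have h3 : (2 : ℂ) * ∑ μ, Sop A μ (Sop A μ v) x = 0 := by
        rw [← hsym, h2, mul_zero]
      exact (mul_eq_zero.mp h3).resolve_left two_ne_zero
    have hSzero : ∀ μ x, Sop A μ v x = 0 := by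
      have h2 : ∀ μ, ∑ x : (∀ ν, Fin (N ν)) × Fin r,
          (starRingEnd ℂ) (v x) * Sop A μ (Sop A μ v) x
          = - ∑ x : (∀ ν, Fin (N ν)) × Fin r,
            (starRingEnd ℂ) (Sop A μ v x) * Sop A μ v x :=
        fun μ => Sop_adjoint A μ (hA1 μ) (hA2 μ) v (Sop A μ v)
      have h4 : ∑ μ, ∑ x : (∀ ν, Fin (N ν)) × Fin r,
          (starRingEnd ℂ) (v x) * Sop A μ (Sop A μ v) x = 0 := by
        rw [Finset.sum_comm]
        refine Finset.sum_eq_zero fun x _ => ?_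
        rw [← Finset.mul_sum, hquad x, mul_zero]
      have h1 : ∑ μ, ∑ x : (∀ ν, Fin (N ν)) × Fin r,
          (starRingEnd ℂ) (Sop A μ v x) * Sop A μ v x = 0 := by
        have h5 : ∀ μ, ∑ x : (∀ ν, Fin (N ν)) × Fin r,
            (starRingEnd ℂ) (Sop A μ v x) * Sop A μ v x
            = - ∑ x : (∀ ν, Fin (N ν)) × Fin r,
              (starRingEnd ℂ) (v x) * Sop A μ (Sop A μ v) x := fun μ => by
          rw [h2 μ, neg_neg]
        rw [Finset.sum_congr rfl fun μ _ => h5 μ, Finset.sum_neg_distrib, h4, neg_zero]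
      have h6 : ∑ μ, ∑ x : (∀ ν, Fin (N ν)) × Fin r,
          Complex.normSq (Sop A μ v x) = 0 := by
        have h7 : ∀ μ x, (starRingEnd ℂ) (Sop A μ v x) * Sop A μ v x
            = ((Complex.normSq (Sop A μ v x) : ℝ) : ℂ) := by
          intro μ x
          rw [mul_comm, Complex.mul_conj]
        rw [Finset.sum_congr rfl fun μ _ => Finset.sum_congr rfl fun x _ => h7 μ x] at h1
        exact_mod_cast h1
      intro μ x
      have h8 := (Finset.sum_eq_zero_iff_of_nonneg
        (fun μ _ => Finset.sum_nonneg fun x _ => Complex.normSq_nonneg _)).mp h6 μ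
        (Finset.mem_univ μ)
      have h9 := (Finset.sum_eq_zero_iff_of_nonneg
        (fun x _ => Complex.normSq_nonneg _)).mp h8 x (Finset.mem_univ x)
      exact Complex.normSq_eq_zero.mp h9
    funext x
    obtain ⟨p, t⟩ := x
    have hApath : A μ₀ = pathAsAdj (N μ₀) := by
      simp only [hA, hc0, Bool.false_eq_true, if_false]
    have hslice : ∀ i : Fin (N μ₀),
        ∑ j, pathAsAdj (N μ₀) i j * v (Function.update p μ₀ j, t) = 0 := by
      intro i
      have h10 := hSzero μ₀ (Function.update p μ₀ i, t)
      unfold Sop at h10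
      simpa [hApath, Function.update_idem] using h10
    have h11 := path_ker_even (hpath μ₀ hc0) heven
      (fun j => v (Function.update p μ₀ j, t)) hslice (p μ₀)
    simpa [Function.update_eq_self] using h11
  · intro hodd
    have hNpos : ∀ ν, 0 < N ν := by
      intro ν
      cases h : cyc ν
      · have := hpath ν h; omega
      · have := hcyc ν h; omega
    set w : ∀ μ₁ : Fin D, Fin (N μ₁) → ℂ :=
      fun μ₁ j => if cyc μ₁ then 1 else (if Even (j : ℕ) then 1 else 0) with hw
    have hwrow : ∀ μ₁ (i : Fin (N μ₁)), ∑ j, A μ₁ i j * w μ₁ j = 0 := by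
      intro μ₁ i
      cases h : cyc μ₁
      · simp only [hA, hw, h, Bool.false_eq_true, if_false]
        exact path_row_parity (hodd μ₁ h) i
      · simp only [hA, hw, h, if_true]
        simpa using cycle_row_one (hcyc μ₁ h) i
    set p₀ : ∀ ν, Fin (N ν) := fun ν => ⟨0, hNpos ν⟩ with hp₀
    have hw0 : ∀ ν, w ν (p₀ ν) = 1 := by
      intro ν
      cases h : cyc ν <;> simp [hw, hp₀, h]
    set vs : Fin r → (((∀ ν, Fin (N ν)) × Fin r) → ℂ) :=
      fun s x => (∏ ν, w ν (x.1 ν)) * (if x.2 = s then 1 else 0) with hvs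
    have hkers : ∀ s, Matrix.toLin' Dop (vs s) = 0 := by
      intro s
      have hmv0 : ∀ x, Dop.mulVec (vs s) x = 0 := by
        intro x
        rw [hmv (vs s) x]
        refine Finset.sum_eq_zero fun μ _ => ?_
        have hG : ∀ y : (∀ ν, Fin (N ν)) × Fin r,
            Gop γ μ (vs s) y = γ μ y.2 s * ∏ ν, w ν (y.1 ν) := by
          intro y
          unfold Gop
          rw [Fintype.sum_eq_single s (fun u hu => by simp [hvs, hu])]
          simp [hvs]
        show Sop A μ (Gop γ μ (vs s)) x = 0
        unfold Sop
        have hprod : ∀ j : Fin (N μ), (∏ ν, w ν ((Function.update x.1 μ j) ν))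
            = w μ j * ∏ ν ∈ Finset.univ.erase μ, w ν (x.1 ν) := by
          intro j
          rw [← Finset.mul_prod_erase Finset.univ _ (Finset.mem_univ μ)]
          congr 1
          · rw [Function.update_self]
          · refine Finset.prod_congr rfl fun ν hν => ?_
            rw [Function.update_of_ne (Finset.mem_erase.mp hν).1]
        calc ∑ j, A μ (x.1 μ) j * Gop γ μ (vs s) (Function.update x.1 μ j, x.2)
            = (γ μ x.2 s * ∏ ν ∈ Finset.univ.erase μ, w ν (x.1 ν)) *
                ∑ j, A μ (x.1 μ) j * w μ j := by
              rw [Finset.mul_sum]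
              refine Finset.sum_congr rfl fun j _ => ?_
              rw [hG (Function.update x.1 μ j, x.2), hprod j]
              ring
          _ = 0 := by rw [hwrow μ (x.1 μ), mul_zero]
      rw [Matrix.toLin'_apply]
      funext x
      exact hmv0 x
    have hprod1 : (∏ ν, w ν (p₀ ν)) = 1 :=
      Finset.prod_eq_one fun ν _ => hw0 ν
    have hli0 : LinearIndependent ℂ vs := by
      rw [Fintype.linearIndependent_iff]
      intro c hc s
      have h12 := congrFun hc (p₀, s)
      simp only [Finset.sum_apply, Pi.smul_apply, smul_eq_mul, Pi.zero_apply] at h12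
      rw [Fintype.sum_eq_single s] at h12
      · simpa [hvs, hprod1] using h12
      · intro s' hs'
        simp [hvs, if_neg (show ¬ s = s' from fun hh => hs' hh.symm)]
    have hli : LinearIndependent ℂ (fun s => (⟨vs s, LinearMap.mem_ker.mpr (hkers s)⟩ :
        LinearMap.ker (Matrix.toLin' Dop))) := by
      apply LinearIndependent.of_comp (Submodule.subtype _)
      exact hli0
    have hcard := hli.fintype_card_le_finrank
    simpa using hcard
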